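/- Let 0 < θ < 1 and x ≥ θ + 1/θ, and set u_θ := 1 − (θx − √(θ²x² − 4θ²))/(2θ²). Then u_θ ∈ [0,1) and the function g(u) := −(1/2)·θxu − (θ²/4)·(1−u)² − (1/2)·log(1−u) attains its minimum over [0,1) at u = u_θ: for every u ∈ [0,1), g(u) ≥ g(u_θ). -/

import Mathlib

noncomputable section

/-- The `u`-dependent part of the large-deviation rate function in the regime
`θ(1-u) ≤ 1`: `g(u) = -(1/2)θxu - (θ²/4)(1-u)² - (1/2)log(1-u)`. -/
def gfun (θ x u : ℝ) : ℝ :=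
  -(1 / 2) * (θ * x * u) - θ ^ 2 / 4 * (1 - u) ^ 2 - (1 / 2) * Real.log (1 - u)

/-- `u_θ = 1 - (θx - √(θ²x² - 4θ²))/(2θ²)`, solving `θ²(1-u)² - θx(1-u) + 1 = 0`. -/
def uTheta (θ x : ℝ) : ℝ :=
  1 - (θ * x - Real.sqrt (θ ^ 2 * x ^ 2 - 4 * θ ^ 2)) / (2 * θ ^ 2)

lemma gfun_hasDerivAt (θ x u : ℝ) (hu : u < 1) :
    HasDerivAt (gfun θ x)
      ((θ ^ 2 * (1 - u) ^ 2 - θ * x * (1 - u) + 1) / (2 * (1 - u))) u := by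
  have h1u : (0:ℝ) < 1 - u := by linarith
  have h1u' : (1:ℝ) - u ≠ 0 := ne_of_gt h1u
  have hsub : HasDerivAt (fun t : ℝ => 1 - t) (-1) u := by
    simpa using (hasDerivAt_id' u).const_sub (1:ℝ)
  have hlog : HasDerivAt (fun t : ℝ => Real.log (1 - t)) ((1 - u)⁻¹ * (-1)) u :=
    (Real.hasDerivAt_log h1u').comp u hsub
  have hsq : HasDerivAt (fun t : ℝ => (1 - t) ^ 2) (2 * (1 - u) ^ 1 * (-1)) u :=
    hsub.pow 2
  have hA : HasDerivAt (fun t : ℝ => -(1/2) * (θ * x * t)) (-(1/2) * (θ * x * 1)) u := by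
    exact ((hasDerivAt_id u).const_mul (θ * x)).const_mul (-(1/2))
  have h := (hA.sub (hsq.const_mul (θ ^ 2 / 4))).sub (hlog.const_mul (1/2))
  refine h.congr_deriv ?_
  field_simp
  ring

/-- For `0 < θ < 1` and `x ≥ θ + 1/θ`, one has `u_θ ∈ [0,1)` and `g` attains its minimum
over `[0,1)` at `u_θ`. -/
theorem gfun_min_subcritical_large_x (θ x : ℝ) (hθ0 : 0 < θ) (hθ1 : θ < 1)
    (hx : θ + 1 / θ ≤ x) :
    uTheta θ x ∈ Set.Ico (0 : ℝ) 1 ∧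
    ∀ u ∈ Set.Ico (0 : ℝ) 1, gfun θ x (uTheta θ x) ≤ gfun θ x u := by
  have hθ0' : θ ≠ 0 := ne_of_gt hθ0
  have hθx : θ ^ 2 + 1 ≤ θ * x := by
    have := mul_le_mul_of_nonneg_left hx (le_of_lt hθ0)
    rw [mul_add, mul_one_div, div_self hθ0'] at this
    nlinarith
  have hx2 : 2 ≤ x := by nlinarith [sq_nonneg (θ - 1)]
  set s : ℝ := Real.sqrt (θ ^ 2 * x ^ 2 - 4 * θ ^ 2) with hs_def
  have hDnonneg : 0 ≤ θ ^ 2 * x ^ 2 - 4 * θ ^ 2 := by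
    nlinarith [mul_nonneg (sq_nonneg θ) (show (0:ℝ) ≤ x ^ 2 - 4 by nlinarith)]
  have hs2 : s ^ 2 = θ ^ 2 * x ^ 2 - 4 * θ ^ 2 := Real.sq_sqrt hDnonneg
  have hs0 : 0 ≤ s := Real.sqrt_nonneg _
  set v : ℝ := (θ * x - s) / (2 * θ ^ 2) with hv_def
  have hu0 : uTheta θ x = 1 - v := rfl
  have hs_lt : s < θ * x := by nlinarith
  have hv_pos : 0 < v := by
    apply div_pos (by linarith) (by positivity)
  have hv_le : v ≤ 1 := by
    rw [hv_def, div_le_one (by positivity)]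
    nlinarith [sq_nonneg (s - (θ * x - 2 * θ ^ 2)), sq_nonneg (s + (θ * x - 2 * θ ^ 2))]
  have hroot : θ ^ 2 * v ^ 2 - θ * x * v + 1 = 0 := by
    rw [hv_def]
    field_simp
    nlinarith [hs2]
  have hmem : uTheta θ x ∈ Set.Ico (0 : ℝ) 1 := by
    rw [hu0]
    constructor <;> simp <;> linarith
  refine ⟨hmem, ?_⟩
  set u₀ : ℝ := uTheta θ x with hu₀_def
  have hu₀0 : 0 ≤ u₀ := hmem.1
  have hu₀1 : u₀ < 1 := hmem.2
  -- derivative sign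
  have hderiv : ∀ u : ℝ, u < 1 → deriv (gfun θ x) u =
      (θ ^ 2 * (1 - u) ^ 2 - θ * x * (1 - u) + 1) / (2 * (1 - u)) :=
    fun u hu => (gfun_hasDerivAt θ x u hu).deriv
  have hanti : AntitoneOn (gfun θ x) (Set.Icc 0 u₀) := by
    apply antitoneOn_of_deriv_nonpos (convex_Icc _ _)
    · intro u hu
      exact ((gfun_hasDerivAt θ x u (lt_of_le_of_lt hu.2 hu₀1)).continuousAt).continuousWithinAt
    · intro u hu
      rw [interior_Icc] at hu
      exact (gfun_hasDerivAt θ x u (lt_trans hu.2 hu₀1)).differentiableAt.differentiableWithinAt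
    · intro u hu
      rw [interior_Icc] at hu
      have hu1 : u < 1 := lt_trans hu.2 hu₀1
      rw [hderiv u hu1]
      apply div_nonpos_of_nonpos_of_nonneg _ (by linarith)
      have ht : v ≤ 1 - u := by
        have h2 : u ≤ u₀ := le_of_lt hu.2
        rw [hu0] at h2
        linarith
      have hupos : 0 < u := hu.1
      have hθsq : θ * θ < θ := mul_lt_of_lt_one_left hθ0 hθ1
      nlinarith [mul_nonneg (by linarith : (0:ℝ) ≤ 1 - u - v)
        (by nlinarith [mul_nonneg (sq_nonneg θ) hupos.le,
            mul_nonneg (sq_nonneg θ) (by linarith : (0:ℝ) ≤ 1 - v)] :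
          (0:ℝ) ≤ θ * x - θ ^ 2 * ((1 - u) + v))]
  have hmono : MonotoneOn (gfun θ x) (Set.Ico u₀ 1) := by
    apply monotoneOn_of_deriv_nonneg (convex_Ico _ _)
    · intro u hu
      exact ((gfun_hasDerivAt θ x u hu.2).continuousAt).continuousWithinAt
    · intro u hu
      rw [interior_Ico] at hu
      exact (gfun_hasDerivAt θ x u hu.2).differentiableAt.differentiableWithinAt
    · intro u hu
      rw [interior_Ico] at hu
      rw [hderiv u hu.2]
      apply div_nonneg _ (by linarith [hu.2])
      have ht : 1 - u ≤ v := by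
        have h2 : u₀ ≤ u := le_of_lt hu.1
        rw [hu0] at h2
        linarith
      have ht0 : 0 < 1 - u := by linarith [hu.2]
      have hupos : 0 ≤ u := le_trans hu₀0 (le_of_lt hu.1)
      have hθsq : θ * θ < θ := mul_lt_of_lt_one_left hθ0 hθ1
      nlinarith [mul_nonneg (by linarith : (0:ℝ) ≤ v - (1 - u))
        (by nlinarith [mul_nonneg (sq_nonneg θ) hupos,
            mul_nonneg (sq_nonneg θ) (by linarith : (0:ℝ) ≤ 1 - v)] :
          (0:ℝ) ≤ θ * x - θ ^ 2 * ((1 - u) + v))]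
  intro u hu
  rcases le_or_gt u u₀ with h | h
  · exact hanti ⟨hu.1, h⟩ ⟨hu₀0, le_refl _⟩ h
  · exact hmono ⟨le_refl _, hu₀1⟩ ⟨le_of_lt h, hu.2⟩ (le_of_lt h)

end
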